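/- For every real 2×2 matrix F, the squared Frobenius distance from F to K satisfies dist²(F, K) = g(|Fv|, |Fw|, det F), where v = (1,1)/√2 and w = (1,−1)/√2. -/

import Mathlib

open Matrix

noncomputable section

/-- Squared Frobenius norm of a real 2×2 matrix. -/
def frobSq (F : Matrix (Fin 2) (Fin 2) ℝ) : ℝ := ∑ i, ∑ j, (F i j) ^ 2

/-- The special orthogonal group SO(2) as a set of matrices. -/
def SO2 : Set (Matrix (Fin 2) (Fin 2) ℝ) := {Q | Qᵀ * Q = 1 ∧ Q.det = 1}

def U1 (l : ℝ) : Matrix (Fin 2) (Fin 2) ℝ := !![l, 0; 0, 1 / l]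

def U2 (l : ℝ) : Matrix (Fin 2) (Fin 2) ℝ := !![1 / l, 0; 0, l]

/-- The two martensitic wells `K = SO(2)U₁ ∪ SO(2)U₂`. -/
def Kset (l : ℝ) : Set (Matrix (Fin 2) (Fin 2) ℝ) :=
  {G | ∃ Q ∈ SO2, G = Q * U1 l ∨ G = Q * U2 l}

/-- Squared Frobenius distance from `F` to the set `K`. -/
def distSqK (l : ℝ) (F : Matrix (Fin 2) (Fin 2) ℝ) : ℝ :=
  sInf {r | ∃ G ∈ Kset l, r = frobSq (F - G)}

def vvec : Fin 2 → ℝ := ![1 / Real.sqrt 2, 1 / Real.sqrt 2]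

def wvec : Fin 2 → ℝ := ![1 / Real.sqrt 2, -(1 / Real.sqrt 2)]

/-- `x(F) = |Fv|`. -/
def xF (F : Matrix (Fin 2) (Fin 2) ℝ) : ℝ := Real.sqrt (∑ i, (F.mulVec vvec i) ^ 2)

/-- `y(F) = |Fw|`. -/
def yF (F : Matrix (Fin 2) (Fin 2) ℝ) : ℝ := Real.sqrt (∑ i, (F.mulVec wvec i) ^ 2)

def Afun (l x y d : ℝ) : ℝ :=
  (x ^ 2 + y ^ 2) * (l ^ 2 + 1 / l ^ 2) / 2
    + (l ^ 2 - 1 / l ^ 2) * Real.sqrt (x ^ 2 * y ^ 2 - d ^ 2) + 2 * d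

def gfun (l x y d : ℝ) : ℝ :=
  x ^ 2 + y ^ 2 + (l ^ 2 + 1 / l ^ 2) - 2 * Real.sqrt (Afun l x y d)
open Matrix

lemma circle_dot_le (e g a b : ℝ) (h : e^2+g^2 = 1) : e*a+g*b ≤ Real.sqrt (a^2+b^2) := by
  have h1 : (e*a+g*b)^2 ≤ a^2+b^2 := by nlinarith [sq_nonneg (e*b - g*a)]
  calc e*a+g*b ≤ |e*a+g*b| := le_abs_self _
    _ = Real.sqrt ((e*a+g*b)^2) := (Real.sqrt_sq_eq_abs _).symm
    _ ≤ Real.sqrt (a^2+b^2) := Real.sqrt_le_sqrt h1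

lemma circle_dot_exists (a b : ℝ) : ∃ e g : ℝ, e^2+g^2 = 1 ∧ e*a+g*b = Real.sqrt (a^2+b^2) := by
  rcases eq_or_lt_of_le (by positivity : (0:ℝ) ≤ a^2+b^2) with h | h
  · have ha : a = 0 := by nlinarith
    have hb : b = 0 := by nlinarith
    exact ⟨1, 0, by norm_num, by simp [ha, hb]⟩
  · have hρ : 0 < Real.sqrt (a^2+b^2) := Real.sqrt_pos.2 h
    have hρ2 : Real.sqrt (a^2+b^2)^2 = a^2+b^2 := Real.sq_sqrt h.le
    refine ⟨a/Real.sqrt (a^2+b^2), b/Real.sqrt (a^2+b^2), ?_, ?_⟩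
    · field_simp
      linarith [hρ2]
    · field_simp
      linarith [hρ2]

lemma mem_SO2_iff (Q : Matrix (Fin 2) (Fin 2) ℝ) :
    Q ∈ SO2 ↔ ∃ e g : ℝ, e^2+g^2 = 1 ∧ Q = !![e, -g; g, e] := by
  constructor
  · rintro ⟨h1, h2⟩
    have e1 := congrFun (congrFun h1 0) 0
    have e2 := congrFun (congrFun h1 0) 1
    have e3 := congrFun (congrFun h1 1) 1
    simp [Matrix.mul_apply, Fin.sum_univ_two, Matrix.one_apply] at e1 e2 e3
    rw [Matrix.det_fin_two] at h2
    have key : (Q 0 1 + Q 1 0)^2 + (Q 1 1 - Q 0 0)^2 = 0 := by nlinarith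
    have k1 : Q 0 1 = -(Q 1 0) := by nlinarith [sq_nonneg (Q 0 1 + Q 1 0), sq_nonneg (Q 1 1 - Q 0 0)]
    have k2 : Q 1 1 = Q 0 0 := by nlinarith [sq_nonneg (Q 0 1 + Q 1 0), sq_nonneg (Q 1 1 - Q 0 0)]
    refine ⟨Q 0 0, Q 1 0, by linear_combination e1, ?_⟩
    conv_lhs => rw [Matrix.eta_fin_two Q]
    rw [k1, k2]
  · rintro ⟨e, g, h, rfl⟩
    have ht : (!![e,-g;g,e] : Matrix (Fin 2) (Fin 2) ℝ)ᵀ = !![e,g;-g,e] := by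
      ext i j
      fin_cases i <;> fin_cases j <;> simp
    constructor
    · rw [ht]
      ext i j
      fin_cases i <;> fin_cases j <;>
        simp [Matrix.mul_apply, Fin.sum_univ_two, Matrix.one_apply] <;>
        first
          | linear_combination h
          | ring
    · rw [Matrix.det_fin_two]
      simp
      linear_combination h

lemma frob_sub (F : Matrix (Fin 2) (Fin 2) ℝ) (e g u u' : ℝ) (h : e^2+g^2 = 1) :
    frobSq (F - !![e,-g;g,e] * !![u,0;0,u']) =
      ((F 0 0)^2 + (F 0 1)^2 + (F 1 0)^2 + (F 1 1)^2) + (u^2+u'^2)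
        - 2*(e*(u*F 0 0 + u'*F 1 1) + g*(u*F 1 0 - u'*F 0 1)) := by
  simp [frobSq, Fin.sum_univ_two, Matrix.sub_apply, Matrix.mul_apply]
  linear_combination (u^2+u'^2)*h
lemma frob_sub' (p q r s e g u u' : ℝ) (h : e^2+g^2 = 1) :
    frobSq (!![p,q;r,s] - !![e,-g;g,e] * !![u,0;0,u']) =
      (p^2+q^2+r^2+s^2) + (u^2+u'^2)
        - 2*(e*(u*p + u'*s) + g*(u*r - u'*q)) := by
  simp [frobSq, Fin.sum_univ_two, Matrix.sub_apply, Matrix.mul_apply]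
  linear_combination (u^2+u'^2)*h

lemma xF_sq (p q r s : ℝ) : xF !![p,q;r,s] ^ 2 = ((p+q)^2+(r+s)^2)/2 := by
  have hnn : (0:ℝ) ≤ ∑ i, ((!![p,q;r,s]).mulVec vvec i)^2 :=
    Finset.sum_nonneg fun i _ => sq_nonneg _
  rw [xF, Real.sq_sqrt hnn]
  simp [Matrix.mulVec, dotProduct, vvec, Fin.sum_univ_two]
  have h2 : Real.sqrt 2 ^ 2 = 2 := Real.sq_sqrt (by norm_num)
  have hs2 : Real.sqrt 2 ≠ 0 := by positivity
  field_simp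
  rw [h2]; ring

lemma yF_sq (p q r s : ℝ) : yF !![p,q;r,s] ^ 2 = ((p-q)^2+(r-s)^2)/2 := by
  have hnn : (0:ℝ) ≤ ∑ i, ((!![p,q;r,s]).mulVec wvec i)^2 :=
    Finset.sum_nonneg fun i _ => sq_nonneg _
  rw [yF, Real.sq_sqrt hnn]
  simp [Matrix.mulVec, dotProduct, wvec, Fin.sum_univ_two]
  have h2 : Real.sqrt 2 ^ 2 = 2 := Real.sq_sqrt (by norm_num)
  have hs2 : Real.sqrt 2 ≠ 0 := by positivity
  field_simp
  ring_nf
  rw [h2]; ring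

set_option maxHeartbeats 1000000 in
theorem distSq_eq_g (l : ℝ) (hl : 1 < l) (F : Matrix (Fin 2) (Fin 2) ℝ) :
    distSqK l F = gfun l (xF F) (yF F) F.det := by
  obtain ⟨p, q, r, s, rfl⟩ : ∃ p q r s, F = !![p,q;r,s] :=
    ⟨F 0 0, F 0 1, F 1 0, F 1 1, Matrix.eta_fin_two F⟩
  have hl0 : (0:ℝ) < l := lt_trans one_pos hl
  have hlne : l ≠ 0 := ne_of_gt hl0
  have hM : 0 ≤ l^2 - 1/l^2 := by
    rw [sub_nonneg, div_le_iff₀ (by positivity)]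
    nlinarith [sq_nonneg (l*l - 1), sq_nonneg l]
  have hdet : (!![p,q;r,s] : Matrix (Fin 2) (Fin 2) ℝ).det = p*s - q*r := by
    rw [Matrix.det_fin_two]; simp
  have hx2 := xF_sq p q r s
  have hy2 := yF_sq p q r s
  have hil : (1/l)^2 = 1/l^2 := by rw [div_pow, one_pow]
  -- the two candidate squared "rho" values
  have hA1nn : (0:ℝ) ≤ (l*p + 1/l*s)^2 + (l*r - 1/l*q)^2 := by positivity
  have hA2nn : (0:ℝ) ≤ (1/l*p + l*s)^2 + (1/l*r - l*q)^2 := by positivity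
  have hmax : Afun l (xF !![p,q;r,s]) (yF !![p,q;r,s]) (!![p,q;r,s] : Matrix (Fin 2) (Fin 2) ℝ).det
      = max ((l*p + 1/l*s)^2 + (l*r - 1/l*q)^2) ((1/l*p + l*s)^2 + (1/l*r - l*q)^2) := by
    have hxy : xF !![p,q;r,s] ^ 2 * yF !![p,q;r,s] ^ 2 - ((!![p,q;r,s] : Matrix (Fin 2) (Fin 2) ℝ).det) ^ 2
        = (((p^2+r^2)-(q^2+s^2))/2)^2 := by
      rw [hx2, hy2, hdet]; ring
    have habs : Real.sqrt (xF !![p,q;r,s] ^ 2 * yF !![p,q;r,s] ^ 2 - ((!![p,q;r,s] : Matrix (Fin 2) (Fin 2) ℝ).det) ^ 2)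
        = |(p^2+r^2)-(q^2+s^2)|/2 := by
      rw [hxy, Real.sqrt_sq_eq_abs, abs_div]
      norm_num
    have hAform : Afun l (xF !![p,q;r,s]) (yF !![p,q;r,s]) (!![p,q;r,s] : Matrix (Fin 2) (Fin 2) ℝ).det
        = (p^2+q^2+r^2+s^2)*(l^2+1/l^2)/2 + (l^2-1/l^2)*(|(p^2+r^2)-(q^2+s^2)|/2) + 2*(p*s-q*r) := by
      rw [Afun, habs, hx2, hy2, hdet]; ring
    have hdiff : (l*p + 1/l*s)^2 + (l*r - 1/l*q)^2 - ((1/l*p + l*s)^2 + (1/l*r - l*q)^2)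
        = (l^2-1/l^2)*((p^2+r^2)-(q^2+s^2)) := by
      field_simp
      ring
    rcases le_total (q^2+s^2) (p^2+r^2) with hab | hab
    · rw [hAform, abs_of_nonneg (by linarith), max_eq_left ?_]
      · field_simp
        ring
      · linarith [mul_nonneg hM (by linarith : (0:ℝ) ≤ (p^2+r^2)-(q^2+s^2)), hdiff]
    · rw [hAform, abs_of_nonpos (by linarith), max_eq_right ?_]
      · field_simp
        ring
      · linarith [mul_nonneg hM (by linarith : (0:ℝ) ≤ (q^2+s^2)-(p^2+r^2)), hdiff]
  have hg : gfun l (xF !![p,q;r,s]) (yF !![p,q;r,s]) (!![p,q;r,s] : Matrix (Fin 2) (Fin 2) ℝ).det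
      = (p^2+q^2+r^2+s^2) + (l^2+1/l^2)
        - 2*Real.sqrt (max ((l*p + 1/l*s)^2 + (l*r - 1/l*q)^2) ((1/l*p + l*s)^2 + (1/l*r - l*q)^2)) := by
    rw [gfun, hmax, hx2, hy2]; ring_nf
  rw [hg, distSqK]
  -- the lower bound
  have hlb : ∀ t ∈ {r0 | ∃ G ∈ Kset l, r0 = frobSq (!![p,q;r,s] - G)},
      (p^2+q^2+r^2+s^2) + (l^2+1/l^2)
        - 2*Real.sqrt (max ((l*p + 1/l*s)^2 + (l*r - 1/l*q)^2) ((1/l*p + l*s)^2 + (1/l*r - l*q)^2)) ≤ t := by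
    rintro t ⟨G, ⟨Q, hQ, hG⟩, rfl⟩
    obtain ⟨e, g, hcirc, rfl⟩ := (mem_SO2_iff Q).1 hQ
    rcases hG with rfl | rfl
    · rw [show U1 l = !![l,0;0,1/l] from rfl, frob_sub' p q r s e g l (1/l) hcirc]
      have h1 : e*(l*p + 1/l*s) + g*(l*r - 1/l*q)
          ≤ Real.sqrt (max ((l*p + 1/l*s)^2 + (l*r - 1/l*q)^2) ((1/l*p + l*s)^2 + (1/l*r - l*q)^2)) :=
        le_trans (circle_dot_le e g _ _ hcirc) (Real.sqrt_le_sqrt (le_max_left _ _))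
      linarith [hil]
    · rw [show U2 l = !![1/l,0;0,l] from rfl, frob_sub' p q r s e g (1/l) l hcirc]
      have h1 : e*(1/l*p + l*s) + g*(1/l*r - l*q)
          ≤ Real.sqrt (max ((l*p + 1/l*s)^2 + (l*r - 1/l*q)^2) ((1/l*p + l*s)^2 + (1/l*r - l*q)^2)) :=
        le_trans (circle_dot_le e g _ _ hcirc) (Real.sqrt_le_sqrt (le_max_right _ _))
      linarith [hil]
  apply le_antisymm
  · -- the bound is attained
    rcases le_total ((1/l*p + l*s)^2 + (1/l*r - l*q)^2) ((l*p + 1/l*s)^2 + (l*r - 1/l*q)^2) with hmx | hmx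
    · obtain ⟨e, g, hcirc, hdot⟩ := circle_dot_exists (l*p + 1/l*s) (l*r - 1/l*q)
      apply csInf_le ⟨_, hlb⟩
      refine ⟨!![e,-g;g,e] * U1 l, ⟨!![e,-g;g,e], (mem_SO2_iff _).2 ⟨e, g, hcirc, rfl⟩, Or.inl rfl⟩, ?_⟩
      rw [show U1 l = !![l,0;0,1/l] from rfl, frob_sub' p q r s e g l (1/l) hcirc,
        max_eq_left hmx, ← hdot]
      ring
    · obtain ⟨e, g, hcirc, hdot⟩ := circle_dot_exists (1/l*p + l*s) (1/l*r - l*q)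
      apply csInf_le ⟨_, hlb⟩
      refine ⟨!![e,-g;g,e] * U2 l, ⟨!![e,-g;g,e], (mem_SO2_iff _).2 ⟨e, g, hcirc, rfl⟩, Or.inr rfl⟩, ?_⟩
      rw [show U2 l = !![1/l,0;0,l] from rfl, frob_sub' p q r s e g (1/l) l hcirc,
        max_eq_right hmx, ← hdot]
      ring
  · apply le_csInf
    · refine ⟨frobSq (!![p,q;r,s] - 1 * U1 l), 1 * U1 l, ⟨1, ⟨by simp, by simp⟩, Or.inl rfl⟩, rfl⟩
    · exact hlb
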